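/- There is no polynomial solution to the minimal surface equation on ℝⁿ of the form P = P_m + P_1 where P_m is a nonzero homogeneous polynomial of degree m ≥ 2 and P_1 is linear. In particular there are no quadratic polynomial solutions. -/

import Mathlib

open MvPolynomial

namespace MSE

variable {n : ℕ}

lemma degree_eq_sum (d : Fin n →₀ ℕ) : d.degree = ∑ i : Fin n, d i :=
  Finset.sum_subset (Finset.subset_univ _)
    (fun i _ hi => Finsupp.notMem_support_iff.mp hi)

lemma degree_add (a b : Fin n →₀ ℕ) : (a + b).degree = a.degree + b.degree := by
  simp [degree_eq_sum, Finsupp.add_apply, Finset.sum_add_distrib]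

lemma degree_single (i : Fin n) (k : ℕ) : (Finsupp.single i k).degree = k := by
  simp [degree_eq_sum, Finsupp.single_apply]

lemma sub_single_add (d : Fin n →₀ ℕ) (i : Fin n) (h : d i ≠ 0) :
    (d - Finsupp.single i 1) + Finsupp.single i 1 = d := by
  ext j
  rcases eq_or_ne j i with rfl | hji
  · simp only [Finsupp.add_apply, Finsupp.tsub_apply, Finsupp.single_eq_same]
    omega
  · simp [Finsupp.add_apply, Finsupp.tsub_apply, Finsupp.single_apply, Ne.symm hji, hji]

lemma support_degree {m : ℕ} {p : MvPolynomial (Fin n) ℝ} (hp : p.IsHomogeneous m)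
    {d : Fin n →₀ ℕ} (hd : d ∈ p.support) : d.degree = m := by
  by_contra h
  exact (MvPolynomial.mem_support_iff.mp hd) (hp.coeff_eq_zero h)

lemma pderiv_isHomogeneous {m : ℕ} {p : MvPolynomial (Fin n) ℝ}
    (hp : p.IsHomogeneous m) (i : Fin n) : (pderiv i p).IsHomogeneous (m - 1) := by
  rw [p.as_sum, map_sum]
  apply IsHomogeneous.sum
  intro d hd
  rw [pderiv_monomial]
  rcases eq_or_ne (d i) 0 with h0 | h0
  · rw [h0]; simp only [Nat.cast_zero, mul_zero, map_zero]
    exact isHomogeneous_zero _ _ _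
  · apply isHomogeneous_monomial
    have h1 : (d - Finsupp.single i 1).degree + 1 = m := by
      have := congrArg Finsupp.degree (sub_single_add d i h0)
      rw [degree_add, degree_single] at this
      rw [this, support_degree hp hd]
    omega

lemma euler {m : ℕ} {p : MvPolynomial (Fin n) ℝ} (hp : p.IsHomogeneous m) :
    ∑ i : Fin n, X i * pderiv i p = C (m : ℝ) * p := by
  conv_lhs => rw [p.as_sum]
  conv_rhs => rw [p.as_sum]
  rw [Finset.mul_sum]
  simp only [map_sum, Finset.mul_sum]
  rw [Finset.sum_comm]
  refine Finset.sum_congr rfl fun d hd => ?_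
  have hdeg : d.degree = m := support_degree hp hd
  have key : ∀ i : Fin n, X i * pderiv i (monomial d (coeff d p))
      = monomial d (coeff d p * (d i : ℝ)) := by
    intro i
    rw [pderiv_monomial]
    rcases eq_or_ne (d i) 0 with h0 | h0
    · rw [h0]; simp
    · rw [X, monomial_mul, add_comm (Finsupp.single i 1) _, sub_single_add d i h0, one_mul]
  rw [Finset.sum_congr rfl fun i _ => key i, C_mul_monomial]
  rw [← map_sum (monomial d) (fun i : Fin n => coeff d p * (d i : ℝ))]
  rw [← Finset.mul_sum]
  congr 1
  rw [← Nat.cast_sum, ← degree_eq_sum, hdeg, mul_comm]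


lemma eq_C_of_isHomogeneous_zero {p : MvPolynomial (Fin n) ℝ} (hp : p.IsHomogeneous 0) :
    p = C (coeff 0 p) := by
  ext d
  rcases eq_or_ne d 0 with rfl | hd
  · simp
  · rw [hp.coeff_eq_zero (by simpa [Finsupp.degree_eq_zero_iff] using hd)]
    rw [coeff_C, if_neg (Ne.symm hd)]

lemma eval_mul_scal {m : ℕ} {p : MvPolynomial (Fin n) ℝ} (hp : p.IsHomogeneous m)
    (r : ℝ) (x : Fin n → ℝ) :
    eval (fun i => r * x i) p = r ^ m * eval x p := by
  conv_lhs => rw [p.as_sum]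
  conv_rhs => rw [p.as_sum]
  rw [map_sum, map_sum, Finset.mul_sum]
  refine Finset.sum_congr rfl fun d hd => ?_
  rw [eval_monomial, eval_monomial]
  have : (d.prod fun i k => (r * x i) ^ k)
      = (d.prod fun i k => r ^ k) * d.prod fun i k => (x i) ^ k := by
    rw [← Finsupp.prod_mul]
    exact Finsupp.prod_congr fun i _ => mul_pow _ _ _
  rw [this]
  have : (d.prod fun i k => r ^ k) = r ^ m := by
    rw [Finsupp.prod, Finset.prod_pow_eq_pow_sum]
    exact congrArg (fun k => r ^ k) (support_degree hp hd)
  rw [this]; ring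

/-- Restriction of a multivariate polynomial to a line. -/
noncomputable def lineP (x w : Fin n → ℝ) (p : MvPolynomial (Fin n) ℝ) : Polynomial ℝ :=
  MvPolynomial.aeval (fun i => Polynomial.C (x i) + Polynomial.C (w i) * Polynomial.X) p

lemma lineP_add (x w : Fin n → ℝ) (p q : MvPolynomial (Fin n) ℝ) :
    lineP x w (p + q) = lineP x w p + lineP x w q := map_add _ _ _

lemma lineP_mul (x w : Fin n → ℝ) (p q : MvPolynomial (Fin n) ℝ) :
    lineP x w (p * q) = lineP x w p * lineP x w q := map_mul _ _ _

lemma lineP_C (x w : Fin n → ℝ) (a : ℝ) : lineP x w (C a) = Polynomial.C a := by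
  simp [lineP]

lemma lineP_X (x w : Fin n → ℝ) (j : Fin n) :
    lineP x w (X j) = Polynomial.C (x j) + Polynomial.C (w j) * Polynomial.X := by
  simp [lineP]

lemma lineP_eval (x w : Fin n → ℝ) (p : MvPolynomial (Fin n) ℝ) (t : ℝ) :
    (lineP x w p).eval t = eval (fun i => x i + w i * t) p := by
  induction p using MvPolynomial.induction_on with
  | C a => simp [lineP]
  | add p q hp hq => rw [lineP_add, Polynomial.eval_add, hp, hq, map_add]
  | mul_X p i hp => rw [lineP_mul, Polynomial.eval_mul, hp, lineP_X, map_mul]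
                    simp

lemma lineP_derivative (x w : Fin n → ℝ) (p : MvPolynomial (Fin n) ℝ) :
    (lineP x w p).derivative = ∑ i : Fin n, Polynomial.C (w i) * lineP x w (pderiv i p) := by
  induction p using MvPolynomial.induction_on with
  | C a => simp [lineP_C, lineP]
  | add p q hp hq =>
      rw [lineP_add, Polynomial.derivative_add, hp, hq, ← Finset.sum_add_distrib]
      refine Finset.sum_congr rfl fun i _ => ?_
      rw [map_add, lineP_add]; ring
  | mul_X p j hp =>
      have this1 : ∀ i : Fin n, lineP x w (pderiv i (p * X j))
          = lineP x w (pderiv i p) * (Polynomial.C (x j) + Polynomial.C (w j) * Polynomial.X)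
            + lineP x w p * lineP x w (pderiv i (X j)) := by
        intro i
        rw [pderiv_mul, lineP_add, lineP_mul, lineP_mul, lineP_X]
      simp only [this1]
      rw [lineP_mul, lineP_X, Polynomial.derivative_mul, hp]
      have hsplit : ∑ i : Fin n, Polynomial.C (w i) *
          (lineP x w (pderiv i p) * (Polynomial.C (x j) + Polynomial.C (w j) * Polynomial.X)
            + lineP x w p * lineP x w (pderiv i (X j)))
          = (∑ i : Fin n, Polynomial.C (w i) * lineP x w (pderiv i p))
              * (Polynomial.C (x j) + Polynomial.C (w j) * Polynomial.X)
            + ∑ i : Fin n, Polynomial.C (w i) * (lineP x w p * lineP x w (pderiv i (X j))) := by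
        rw [Finset.sum_mul, ← Finset.sum_add_distrib]
        exact Finset.sum_congr rfl fun i _ => by ring
      rw [hsplit]
      have hlast : ∑ i : Fin n, Polynomial.C (w i) * (lineP x w p * lineP x w (pderiv i (X j)))
          = Polynomial.C (w j) * lineP x w p := by
        rw [Finset.sum_eq_single j]
        · rw [pderiv_X_self]
          have : lineP x w (1 : MvPolynomial (Fin n) ℝ) = 1 := map_one _
          rw [this]; ring
        · intro i _ hij
          rw [pderiv_X_of_ne (Ne.symm hij)]
          have : lineP x w (0 : MvPolynomial (Fin n) ℝ) = 0 := map_zero _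
          rw [this]; ring
        · simp
      rw [hlast]
      have hder : Polynomial.derivative (Polynomial.C (x j) + Polynomial.C (w j) * Polynomial.X)
          = Polynomial.C (w j) := by simp
      rw [hder]
      ring

lemma poly_deriv_zero (φ : Polynomial ℝ) (h : ∀ t, 0 ≤ φ.eval t) (h0 : φ.eval 0 = 0) :
    φ.derivative.eval 0 = 0 := by
  have hmin : IsLocalMin (fun t => φ.eval t) 0 :=
    Filter.Eventually.of_forall (fun t => by show φ.eval 0 ≤ φ.eval t; rw [h0]; exact h t)
  have := hmin.deriv_eq_zero
  rwa [Polynomial.deriv] at this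

lemma poly_second_nonneg (φ : Polynomial ℝ) (h : ∀ t, 0 ≤ φ.eval t) (h0 : φ.eval 0 = 0) :
    0 ≤ (φ.derivative.derivative).eval 0 := by
  have h1 : φ.derivative.eval 0 = 0 := poly_deriv_zero φ h h0
  obtain ⟨ψ, hψ⟩ : Polynomial.X ∣ φ := Polynomial.X_dvd_iff.mpr
    (by rwa [Polynomial.coeff_zero_eq_eval_zero])
  have hψ0 : ψ.eval 0 = 0 := by
    have := h1
    rw [hψ, Polynomial.derivative_mul, Polynomial.derivative_X] at this
    simpa using this
  obtain ⟨ρ, hρ⟩ : Polynomial.X ∣ ψ := Polynomial.X_dvd_iff.mpr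
    (by rwa [Polynomial.coeff_zero_eq_eval_zero])
  have hφρ : φ = Polynomial.X ^ 2 * ρ := by rw [hψ, hρ]; ring
  have hρ0 : 0 ≤ ρ.eval 0 := by
    have hev : ∀ t : ℝ, t ≠ 0 → 0 ≤ ρ.eval t := by
      intro t ht
      have := h t
      rw [hφρ] at this
      simp only [Polynomial.eval_mul, Polynomial.eval_pow, Polynomial.eval_X] at this
      nlinarith [pow_two_pos_of_ne_zero ht, this]
    have htend : Filter.Tendsto (fun t => ρ.eval t) (nhdsWithin 0 {(0:ℝ)}ᶜ)
        (nhds (ρ.eval 0)) :=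
      (ρ.continuous_aeval.tendsto 0).mono_left nhdsWithin_le_nhds
    refine ge_of_tendsto htend ?_
    filter_upwards [self_mem_nhdsWithin] with t ht
    exact hev t ht
  rw [hφρ]
  simp only [Polynomial.derivative_mul, Polynomial.derivative_pow, Polynomial.derivative_X,
    map_add, Polynomial.eval_add, Polynomial.eval_mul, Polynomial.eval_pow, Polynomial.eval_X]
  norm_num
  linarith

lemma max_point_conditions {m : ℕ} (hm : 2 ≤ m) {u : MvPolynomial (Fin n) ℝ}
    {x₀ : Fin n → ℝ} {M : ℝ} (hM : 0 < M)
    (hx₀ : ∑ i : Fin n, (x₀ i)^2 = 1) (hMval : eval x₀ u = M)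
    (hglob : ∀ y : Fin n → ℝ, (eval y u)^2 ≤ M^2 * (∑ i : Fin n, (y i)^2)^m)
    (w : Fin n → ℝ) :
    (∑ i : Fin n, w i * eval x₀ (pderiv i u) = m * M * (∑ i : Fin n, x₀ i * w i)) ∧
    (∑ i : Fin n, ∑ j : Fin n, w i * w j * eval x₀ (pderiv j (pderiv i u))
       ≤ M * (m * (∑ i : Fin n, (w i)^2)
             + ((m:ℝ)^2 - 2*m) * (∑ i : Fin n, x₀ i * w i)^2)) := by
  have hm1 : (1:ℝ) ≤ (m:ℝ) := by exact_mod_cast Nat.one_le_of_lt hm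
  set α : ℝ := ∑ i : Fin n, x₀ i * w i with hα
  set β : ℝ := ∑ i : Fin n, (w i)^2 with hβ
  set G : Fin n → ℝ := fun i => eval x₀ (pderiv i u) with hG
  set D1 : ℝ := ∑ i : Fin n, w i * G i with hD1
  set D2 : ℝ := ∑ i : Fin n, ∑ j : Fin n, w i * w j * eval x₀ (pderiv j (pderiv i u)) with hD2
  set P : Polynomial ℝ := lineP x₀ w u with hP
  set Q : Polynomial ℝ :=
    ∑ i : Fin n, (Polynomial.C (x₀ i) + Polynomial.C (w i) * Polynomial.X)^2 with hQ
  set φ : Polynomial ℝ := Polynomial.C (M^2) * Q^m - P^2 with hφ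
  have hfun0 : (fun i => x₀ i + w i * 0) = x₀ := funext fun i => by ring
  -- eval facts
  have hQe : ∀ t : ℝ, Q.eval t = ∑ i : Fin n, (x₀ i + w i * t)^2 := by
    intro t; simp [hQ, Polynomial.eval_finset_sum]
  have hPe : ∀ t : ℝ, P.eval t = eval (fun i => x₀ i + w i * t) u := fun t => lineP_eval _ _ _ _
  have hQ0 : Q.eval 0 = 1 := by rw [hQe 0]; simp only [mul_zero, add_zero]; exact hx₀
  have hP0 : P.eval 0 = M := by rw [hPe 0, hfun0, hMval]
  -- nonnegativity
  have hφe : ∀ t : ℝ, φ.eval t = M^2 * (Q.eval t)^m - (P.eval t)^2 := by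
    intro t; simp [hφ]
  have hφnn : ∀ t : ℝ, 0 ≤ φ.eval t := by
    intro t
    rw [hφe, hQe, hPe]
    have := hglob (fun i => x₀ i + w i * t)
    linarith
  have hφ0 : φ.eval 0 = 0 := by
    rw [hφe, hQ0, hP0, one_pow]; ring
  -- derivatives of Q
  have hQd : Q.derivative
      = ∑ i : Fin n, (2 * Polynomial.C (w i)
          * (Polynomial.C (x₀ i) + Polynomial.C (w i) * Polynomial.X)) := by
    rw [hQ, Polynomial.derivative_sum]
    refine Finset.sum_congr rfl fun i _ => ?_
    rw [Polynomial.derivative_pow]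
    simp [map_ofNat]
    ring
  have hQd0 : Q.derivative.eval 0 = 2 * α := by
    rw [hQd]
    simp [Polynomial.eval_finset_sum, Finset.mul_sum]
    rw [hα, Finset.mul_sum]
    exact Finset.sum_congr rfl fun i _ => by ring
  have hQdd0 : Q.derivative.derivative.eval 0 = 2 * β := by
    rw [hQd, Polynomial.derivative_sum]
    have : ∀ i : Fin n, Polynomial.derivative (2 * Polynomial.C (w i)
          * (Polynomial.C (x₀ i) + Polynomial.C (w i) * Polynomial.X))
        = 2 * Polynomial.C (w i) * Polynomial.C (w i) := by
      intro i
      rw [Polynomial.derivative_mul]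
      simp
    simp only [this]
    simp [Polynomial.eval_finset_sum, hβ, Finset.mul_sum]
    exact Finset.sum_congr rfl fun i _ => by ring
  -- derivatives of P
  have hPd : P.derivative = ∑ i : Fin n, Polynomial.C (w i) * lineP x₀ w (pderiv i u) :=
    lineP_derivative _ _ _
  have hPd0 : P.derivative.eval 0 = D1 := by
    rw [hPd]
    simp only [Polynomial.eval_finset_sum, Polynomial.eval_mul, Polynomial.eval_C]
    refine Finset.sum_congr rfl fun i _ => ?_
    rw [lineP_eval, hfun0]
  have hPdd0 : P.derivative.derivative.eval 0 = D2 := by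
    rw [hPd, Polynomial.derivative_sum]
    have : ∀ i : Fin n, Polynomial.derivative
          (Polynomial.C (w i) * lineP x₀ w (pderiv i u))
        = Polynomial.C (w i) * ∑ j : Fin n, Polynomial.C (w j) * lineP x₀ w (pderiv j (pderiv i u)) := by
      intro i
      rw [Polynomial.derivative_mul, lineP_derivative]
      simp
    simp only [this]
    simp only [Polynomial.eval_finset_sum, Polynomial.eval_mul, Polynomial.eval_C]
    refine Finset.sum_congr rfl fun i _ => ?_
    rw [Finset.mul_sum]
    refine Finset.sum_congr rfl fun j _ => ?_
    rw [lineP_eval, hfun0]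
    ring
  -- derivative of φ
  have hφd : φ.derivative = Polynomial.C (M^2) * ((m : Polynomial ℝ) * Q^(m-1) * Q.derivative)
      - 2 * P * P.derivative := by
    rw [hφ, Polynomial.derivative_sub, Polynomial.derivative_mul, Polynomial.derivative_C,
      Polynomial.derivative_pow, Polynomial.derivative_pow]
    simp [map_ofNat]
  -- first order condition
  have hfirst : D1 = m * M * α := by
    have h1 := poly_deriv_zero φ hφnn hφ0
    rw [hφd] at h1
    simp only [Polynomial.eval_sub, Polynomial.eval_mul, Polynomial.eval_pow,
      Polynomial.eval_natCast, Polynomial.eval_ofNat, Polynomial.eval_C] at h1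
    rw [hQ0, hQd0, hP0, hPd0, one_pow] at h1
    have h2M : (0:ℝ) < 2 * M := by linarith
    nlinarith [h1]
  refine ⟨by rw [← hD1, ← hα] at *; exact hfirst, ?_⟩
  -- second order condition
  have hsecond := poly_second_nonneg φ hφnn hφ0
  have hφdd : φ.derivative.derivative
      = Polynomial.C (M^2) * ((m : Polynomial ℝ) *
          (((m-1 : ℕ) : Polynomial ℝ) * Q^(m-2) * Q.derivative * Q.derivative
            + Q^(m-1) * Q.derivative.derivative))
        - (2 * P.derivative * P.derivative + 2 * P * P.derivative.derivative) := by
    rw [hφd, Polynomial.derivative_sub, Polynomial.derivative_mul, Polynomial.derivative_C,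
      Polynomial.derivative_mul, Polynomial.derivative_mul, Polynomial.derivative_natCast,
      Polynomial.derivative_pow, Polynomial.derivative_mul, Polynomial.derivative_mul]
    have hmm : m - 1 - 1 = m - 2 := by omega
    rw [hmm]
    simp only [Nat.cast_ofNat, map_ofNat, Polynomial.derivative_ofNat, zero_mul, zero_add,
      mul_zero, add_zero, Polynomial.C_eq_natCast]
    ring
  rw [hφdd] at hsecond
  simp only [Polynomial.eval_sub, Polynomial.eval_add, Polynomial.eval_mul, Polynomial.eval_pow,
    Polynomial.eval_natCast, Polynomial.eval_ofNat, Polynomial.eval_C] at hsecond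
  rw [hQ0, hQd0, hQdd0, hP0, hPd0, hPdd0, one_pow, one_pow] at hsecond
  have hcast : ((m - 1 : ℕ) : ℝ) = (m:ℝ) - 1 := by
    have h1m : 1 ≤ m := by omega
    rw [Nat.cast_sub h1m, Nat.cast_one]
  rw [hcast, hfirst] at hsecond
  nlinarith [hsecond, hM]

lemma key {m : ℕ} (hm : 2 ≤ m) {u : MvPolynomial (Fin n) ℝ} (hu : u.IsHomogeneous m)
    (c : Fin n → ℝ)
    (E0 : ∀ x : Fin n → ℝ,
      (1 + ∑ i : Fin n, (c i)^2) * (∑ i : Fin n, eval x (pderiv i (pderiv i u)))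
        = ∑ i : Fin n, ∑ j : Fin n, c i * c j * eval x (pderiv j (pderiv i u)))
    (E2 : ∀ x : Fin n → ℝ,
      (∑ i : Fin n, (eval x (pderiv i u))^2) * (∑ i : Fin n, eval x (pderiv i (pderiv i u)))
        = ∑ i : Fin n, ∑ j : Fin n,
            eval x (pderiv i u) * eval x (pderiv j u) * eval x (pderiv j (pderiv i u)))
    (x₀ : Fin n → ℝ) (hx₀ : ∑ i : Fin n, (x₀ i)^2 = 1) (hMpos : 0 < eval x₀ u)
    (hmax : ∀ y : Fin n → ℝ, (∑ i : Fin n, (y i)^2 = 1) → (eval y u)^2 ≤ (eval x₀ u)^2) :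
    False := by
  have hm0 : m ≠ 0 := by omega
  have hmR : (2:ℝ) ≤ (m:ℝ) := by exact_mod_cast hm
  set M : ℝ := eval x₀ u with hMdef
  -- global bound
  have hglob : ∀ y : Fin n → ℝ, (eval y u)^2 ≤ M^2 * (∑ i : Fin n, (y i)^2)^m := by
    intro y
    have hr2nn : 0 ≤ ∑ i : Fin n, (y i)^2 := Finset.sum_nonneg fun i _ => sq_nonneg _
    rcases eq_or_lt_of_le hr2nn with hr2 | hr2
    · have hy : ∀ i, y i = 0 := by
        intro i
        have := (Finset.sum_eq_zero_iff_of_nonneg (fun i _ => sq_nonneg (y i))).mp hr2.symm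
          i (Finset.mem_univ i)
        exact pow_eq_zero_iff (n := 2) (by norm_num) |>.mp this
      have h00 : (fun i => (0:ℝ) * y i) = y := funext fun i => by rw [hy i]; ring
      have h0 := eval_mul_scal hu 0 y
      rw [h00, zero_pow hm0, zero_mul] at h0
      rw [h0, ← hr2, zero_pow hm0]
      norm_num
    · set r2 : ℝ := ∑ i : Fin n, (y i)^2 with hr2def
      set r : ℝ := Real.sqrt r2 with hrdef
      have hr : 0 < r := Real.sqrt_pos.mpr hr2
      have hrsq : r^2 = r2 := Real.sq_sqrt (le_of_lt hr2)
      have hz : ∑ i : Fin n, ((1/r) * y i)^2 = 1 := by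
        have : ∀ i : Fin n, ((1/r) * y i)^2 = (1/r)^2 * (y i)^2 := fun i => by ring
        rw [Finset.sum_congr rfl fun i _ => this i, ← Finset.mul_sum, ← hr2def]
        field_simp [hrsq]
        exact hrsq.symm
      have hev := eval_mul_scal hu (1/r) y
      have hb := hmax _ hz
      rw [hev] at hb
      have hcanc : (1/r)^m * r^m = 1 := by
        rw [← mul_pow, one_div, inv_mul_cancel₀ hr.ne', one_pow]
      have hE : (r^m)^2 * ((1/r)^m * eval y u)^2 = (eval y u)^2 := by
        have : r^m * ((1/r)^m * eval y u) = eval y u := by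
          rw [← mul_assoc, mul_comm (r^m), hcanc, one_mul]
        calc (r^m)^2 * ((1/r)^m * eval y u)^2 = (r^m * ((1/r)^m * eval y u))^2 := by ring
          _ = (eval y u)^2 := by rw [this]
      have hr2m : (r^m)^2 = r2^m := by
        rw [← pow_mul, mul_comm m 2, pow_mul, hrsq]
      have h2 : (r^m)^2 * ((1/r)^m * eval y u)^2 ≤ (r^m)^2 * M^2 :=
        mul_le_mul_of_nonneg_left hb (sq_nonneg _)
      rw [hE, hr2m] at h2
      calc (eval y u)^2 ≤ r2^m * M^2 := h2
        _ = M^2 * r2^m := by ring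
  -- gradient at the max point
  have hfirst : ∀ i : Fin n, eval x₀ (pderiv i u) = (m:ℝ) * M * x₀ i := by
    intro i
    have h := (max_point_conditions hm hMpos hx₀ rfl hglob (Pi.single i (1:ℝ))).1
    have hL : ∑ j : Fin n, (Pi.single i (1:ℝ) : Fin n → ℝ) j * eval x₀ (pderiv j u)
        = eval x₀ (pderiv i u) := by
      simp [Pi.single_apply]
    have hR : ∑ j : Fin n, x₀ j * (Pi.single i (1:ℝ) : Fin n → ℝ) j = x₀ i := by
      simp [Pi.single_apply]
    rw [hL, hR] at h
    exact h
  -- Euler identity for the rows of the Hessian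
  have hcast : ((m - 1 : ℕ) : ℝ) = (m:ℝ) - 1 := by
    rw [Nat.cast_sub (by omega : 1 ≤ m), Nat.cast_one]
  have hrow : ∀ i : Fin n, ∑ j : Fin n, x₀ j * eval x₀ (pderiv j (pderiv i u))
      = ((m:ℝ) - 1) * eval x₀ (pderiv i u) := by
    intro i
    have h := congrArg (eval x₀) (euler (pderiv_isHomogeneous hu i))
    rw [map_sum, eval_mul, eval_C, hcast] at h
    rw [← h]
    exact Finset.sum_congr rfl fun j _ => by rw [eval_mul, eval_X]
  -- squared gradient
  have hGsq : ∑ i : Fin n, (eval x₀ (pderiv i u))^2 = (m:ℝ)^2 * M^2 := by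
    have h1 : ∀ i : Fin n, (eval x₀ (pderiv i u))^2 = (m:ℝ)^2 * M^2 * (x₀ i)^2 :=
      fun i => by rw [hfirst i]; ring
    rw [Finset.sum_congr rfl fun i _ => h1 i, ← Finset.mul_sum, hx₀, mul_one]
  -- Laplacian at the max point
  have hT : ∑ i : Fin n, eval x₀ (pderiv i (pderiv i u)) = (m:ℝ) * ((m:ℝ) - 1) * M := by
    have h := E2 x₀
    have hRHS : ∑ i : Fin n, ∑ j : Fin n,
        eval x₀ (pderiv i u) * eval x₀ (pderiv j u) * eval x₀ (pderiv j (pderiv i u))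
        = (m:ℝ)^2 * M^2 * ((m:ℝ) * ((m:ℝ) - 1) * M) := by
      have hin : ∀ i : Fin n, ∑ j : Fin n,
          eval x₀ (pderiv i u) * eval x₀ (pderiv j u) * eval x₀ (pderiv j (pderiv i u))
          = (m:ℝ) * M * ((m:ℝ) - 1) * (eval x₀ (pderiv i u))^2 := by
        intro i
        have h2 : ∀ j : Fin n, eval x₀ (pderiv i u) * eval x₀ (pderiv j u)
              * eval x₀ (pderiv j (pderiv i u))
            = eval x₀ (pderiv i u) * ((m:ℝ) * M)
              * (x₀ j * eval x₀ (pderiv j (pderiv i u))) := by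
          intro j
          rw [hfirst j]; ring
        rw [Finset.sum_congr rfl fun j _ => h2 j, ← Finset.mul_sum, hrow i]
        ring
      rw [Finset.sum_congr rfl fun i _ => hin i, ← Finset.mul_sum, hGsq]
      ring
    rw [hRHS, hGsq] at h
    have hmM : ((m:ℝ)^2 * M^2) ≠ 0 := by positivity
    exact mul_left_cancel₀ hmM h
  -- second order condition in direction c and conclusion
  have hsec := (max_point_conditions hm hMpos hx₀ rfl hglob c).2
  have hE0 := E0 x₀
  rw [hT] at hE0
  have hCS : (∑ i : Fin n, x₀ i * c i)^2 ≤ ∑ i : Fin n, (c i)^2 := by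
    have h3 := Finset.sum_mul_sq_le_sq_mul_sq Finset.univ x₀ c
    rwa [hx₀, one_mul] at h3
  have hKnn : 0 ≤ ∑ i : Fin n, (c i)^2 := Finset.sum_nonneg fun i _ => sq_nonneg _
  have hcoef : (0:ℝ) ≤ (m:ℝ)^2 - 2*(m:ℝ) := by nlinarith [hmR]
  nlinarith [hE0, hsec, hCS, hKnn, hMpos, hmR, mul_le_mul_of_nonneg_left hCS hcoef,
    mul_pos hMpos hMpos]

end MSE

open MSE

/-- There is no polynomial solution of the minimal surface equation on `ℝⁿ` of the form
`P = P_m + P_1` with `P_m` a nonzero homogeneous polynomial of degree `m ≥ 2` and `P_1`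
homogeneous linear.  In particular there are no quadratic polynomial solutions. -/
theorem stmt6 {n : ℕ} (m : ℕ) (hm : 2 ≤ m) (Pm P1 : MvPolynomial (Fin n) ℝ)
    (hPm : Pm.IsHomogeneous m) (hPm0 : Pm ≠ 0) (hP1 : P1.IsHomogeneous 1)
    (hMSE : (1 + ∑ i : Fin n, (pderiv i (Pm + P1)) ^ 2)
          * (∑ i : Fin n, pderiv i (pderiv i (Pm + P1)))
      - ∑ i : Fin n, ∑ j : Fin n,
          pderiv i (Pm + P1) * pderiv j (Pm + P1) * pderiv j (pderiv i (Pm + P1)) = 0) :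
    False := by
  classical
  -- the case of no variables
  rcases Nat.eq_zero_or_pos n with hn0 | hn0
  · subst hn0
    have h1 : Pm.totalDegree = m := hPm.totalDegree hPm0
    obtain ⟨a, ha⟩ := MvPolynomial.C_surjective (Fin 0) Pm
    rw [← ha, totalDegree_C] at h1
    omega
  -- the constant gradient of P1
  have hc0 : ∀ i : Fin n, (pderiv i P1).IsHomogeneous 0 := fun i =>
    pderiv_isHomogeneous hP1 i
  set c : Fin n → ℝ := fun i => coeff 0 (pderiv i P1) with hcdef
  have hc : ∀ i : Fin n, pderiv i P1 = C (c i) := fun i =>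
    eq_C_of_isHomogeneous_zero (hc0 i)
  -- the three homogeneous components of the equation
  set A0 : MvPolynomial (Fin n) ℝ :=
    (1 + ∑ i : Fin n, (C (c i))^2) * (∑ i : Fin n, pderiv i (pderiv i Pm))
      - ∑ i : Fin n, ∑ j : Fin n, C (c i) * C (c j) * pderiv j (pderiv i Pm) with hA0def
  set A1 : MvPolynomial (Fin n) ℝ :=
    (2 * ∑ i : Fin n, C (c i) * pderiv i Pm) * (∑ i : Fin n, pderiv i (pderiv i Pm))
      - ∑ i : Fin n, ∑ j : Fin n,
          (C (c i) * pderiv j Pm + pderiv i Pm * C (c j)) * pderiv j (pderiv i Pm) with hA1def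
  set A2 : MvPolynomial (Fin n) ℝ :=
    (∑ i : Fin n, (pderiv i Pm)^2) * (∑ i : Fin n, pderiv i (pderiv i Pm))
      - ∑ i : Fin n, ∑ j : Fin n,
          pderiv i Pm * pderiv j Pm * pderiv j (pderiv i Pm) with hA2def
  have hd1 : ∀ i : Fin n, pderiv i (Pm + P1) = pderiv i Pm + C (c i) := fun i => by
    rw [map_add, hc i]
  have hd2 : ∀ i j : Fin n, pderiv j (pderiv i (Pm + P1)) = pderiv j (pderiv i Pm) :=
    fun i j => by rw [map_add, hc i, map_add, pderiv_C, add_zero]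
  have hzero : A0 + A1 + A2 = 0 := by
    rw [← hMSE, hA0def, hA1def, hA2def]
    simp only [hd1, map_add, pderiv_C, add_zero]
    have e1 : ∑ i : Fin n, (pderiv i Pm + C (c i))^2
        = (∑ i : Fin n, (pderiv i Pm)^2)
          + ((2 * ∑ i : Fin n, C (c i) * pderiv i Pm) + ∑ i : Fin n, (C (c i))^2) := by
      rw [Finset.mul_sum, ← Finset.sum_add_distrib, ← Finset.sum_add_distrib]
      exact Finset.sum_congr rfl fun i _ => by ring
    have e2 : ∑ i : Fin n, ∑ j : Fin n,
          (pderiv i Pm + C (c i)) * (pderiv j Pm + C (c j)) * pderiv j (pderiv i Pm)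
        = (∑ i : Fin n, ∑ j : Fin n,
              pderiv i Pm * pderiv j Pm * pderiv j (pderiv i Pm))
          + ((∑ i : Fin n, ∑ j : Fin n,
              (C (c i) * pderiv j Pm + pderiv i Pm * C (c j)) * pderiv j (pderiv i Pm))
            + ∑ i : Fin n, ∑ j : Fin n,
              C (c i) * C (c j) * pderiv j (pderiv i Pm)) := by
      rw [← Finset.sum_add_distrib, ← Finset.sum_add_distrib]
      refine Finset.sum_congr rfl fun i _ => ?_
      rw [← Finset.sum_add_distrib, ← Finset.sum_add_distrib]
      exact Finset.sum_congr rfl fun j _ => by ring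
    rw [e1, e2]
    ring
  -- homogeneity of the components
  have hg_hom : ∀ i : Fin n, (pderiv i Pm).IsHomogeneous (m-1) := fun i =>
    pderiv_isHomogeneous hPm i
  have hH_hom : ∀ i j : Fin n, (pderiv j (pderiv i Pm)).IsHomogeneous (m-2) := by
    intro i j
    have h := pderiv_isHomogeneous (hg_hom i) j
    rwa [Nat.sub_sub, show (1+1 : ℕ) = 2 from rfl] at h
  have hT_hom : (∑ i : Fin n, pderiv i (pderiv i Pm)).IsHomogeneous (m-2) :=
    IsHomogeneous.sum _ _ _ fun i _ => hH_hom i i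
  have hA0_hom : A0.IsHomogeneous (m-2) := by
    rw [hA0def]
    refine IsHomogeneous.sub ?_ (IsHomogeneous.sum _ _ _ fun i _ =>
      IsHomogeneous.sum _ _ _ fun j _ => ?_)
    · have h1 : ((1 : MvPolynomial (Fin n) ℝ)
          + ∑ i : Fin n, (C (c i))^2).IsHomogeneous 0 :=
        (isHomogeneous_one _ _).add (IsHomogeneous.sum _ _ _ fun i _ =>
          (isHomogeneous_C _ (c i)).pow 2)
      have h2 := h1.mul hT_hom
      rwa [zero_add] at h2
    · have h2 := ((isHomogeneous_C _ (c i)).mul (isHomogeneous_C _ (c j))).mul (hH_hom i j)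
      rwa [zero_add, zero_add] at h2
  have hA1_hom : A1.IsHomogeneous ((m-1) + (m-2)) := by
    rw [hA1def]
    refine IsHomogeneous.sub ?_ (IsHomogeneous.sum _ _ _ fun i _ =>
      IsHomogeneous.sum _ _ _ fun j _ => ?_)
    · have h1 : ((2 : MvPolynomial (Fin n) ℝ)
          * ∑ i : Fin n, C (c i) * pderiv i Pm).IsHomogeneous (m-1) := by
        rw [two_mul]
        have hs : (∑ i : Fin n, C (c i) * pderiv i Pm).IsHomogeneous (m-1) :=
          IsHomogeneous.sum _ _ _ fun i _ => by
            have h := (isHomogeneous_C _ (c i)).mul (hg_hom i)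
            rwa [zero_add] at h
        exact hs.add hs
      exact h1.mul hT_hom
    · refine IsHomogeneous.mul (IsHomogeneous.add ?_ ?_) (hH_hom i j)
      · have h := (isHomogeneous_C _ (c i)).mul (hg_hom j)
        rwa [zero_add] at h
      · exact (hg_hom i).mul (isHomogeneous_C _ (c j))
  have hA2_hom : A2.IsHomogeneous ((m-1)*2 + (m-2)) := by
    rw [hA2def]
    refine IsHomogeneous.sub
      ((IsHomogeneous.sum _ _ _ fun i _ => (hg_hom i).pow 2).mul hT_hom)
      (IsHomogeneous.sum _ _ _ fun i _ => IsHomogeneous.sum _ _ _ fun j _ => ?_)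
    have h := ((hg_hom i).mul (hg_hom j)).mul (hH_hom i j)
    rwa [← mul_two (m-1)] at h
  -- extraction of the components of degree m-2 and 3m-4
  have hne1 : ¬ (m - 2 = (m-1) + (m-2)) := by omega
  have hne2 : ¬ (m - 2 = (m-1)*2 + (m-2)) := by omega
  have hne3 : ¬ ((m-1)*2 + (m-2) = m - 2) := by omega
  have hne4 : ¬ ((m-1)*2 + (m-2) = (m-1) + (m-2)) := by omega
  have hA0_eq : A0 = 0 := by
    have h := congrArg (homogeneousComponent (m-2)) hzero
    rw [map_add, map_add, map_zero,
      homogeneousComponent_of_mem ((mem_homogeneousSubmodule _ _).mpr hA0_hom),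
      homogeneousComponent_of_mem ((mem_homogeneousSubmodule _ _).mpr hA1_hom),
      homogeneousComponent_of_mem ((mem_homogeneousSubmodule _ _).mpr hA2_hom),
      if_pos rfl, if_neg hne1, if_neg hne2, add_zero, add_zero] at h
    exact h
  have hA2_eq : A2 = 0 := by
    have h := congrArg (homogeneousComponent ((m-1)*2 + (m-2))) hzero
    rw [map_add, map_add, map_zero,
      homogeneousComponent_of_mem ((mem_homogeneousSubmodule _ _).mpr hA0_hom),
      homogeneousComponent_of_mem ((mem_homogeneousSubmodule _ _).mpr hA1_hom),
      homogeneousComponent_of_mem ((mem_homogeneousSubmodule _ _).mpr hA2_hom),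
      if_pos rfl, if_neg hne3, if_neg hne4, zero_add, zero_add] at h
    exact h
  -- pointwise versions
  have E0ev : ∀ x : Fin n → ℝ,
      (1 + ∑ i : Fin n, (c i)^2) * (∑ i : Fin n, eval x (pderiv i (pderiv i Pm)))
        = ∑ i : Fin n, ∑ j : Fin n, c i * c j * eval x (pderiv j (pderiv i Pm)) := by
    intro x
    have h := congrArg (eval x) hA0_eq
    rw [hA0def] at h
    simp only [map_sub, map_mul, map_add, map_one, map_sum, map_pow, eval_C, map_zero] at h
    linarith [h]
  have E2ev : ∀ x : Fin n → ℝ,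
      (∑ i : Fin n, (eval x (pderiv i Pm))^2)
          * (∑ i : Fin n, eval x (pderiv i (pderiv i Pm)))
        = ∑ i : Fin n, ∑ j : Fin n,
            eval x (pderiv i Pm) * eval x (pderiv j Pm) * eval x (pderiv j (pderiv i Pm)) := by
    intro x
    have h := congrArg (eval x) hA2_eq
    rw [hA2def] at h
    simp only [map_sub, map_mul, map_add, map_one, map_sum, map_pow, eval_C, map_zero] at h
    linarith [h]
  -- a maximum point of Pm² on the unit sphere
  have hcont : Continuous fun x : Fin n → ℝ => ∑ i : Fin n, (x i)^2 :=
    continuous_finset_sum _ fun i _ => (continuous_apply i).pow 2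
  have hclosed : IsClosed {x : Fin n → ℝ | ∑ i : Fin n, (x i)^2 = 1} :=
    isClosed_eq hcont continuous_const
  have hbdd : Bornology.IsBounded {x : Fin n → ℝ | ∑ i : Fin n, (x i)^2 = 1} := by
    rw [Metric.isBounded_iff_subset_closedBall 0]
    refine ⟨1, fun x hx => ?_⟩
    simp only [Metric.mem_closedBall, dist_zero_right]
    rw [pi_norm_le_iff_of_nonneg (by norm_num : (0:ℝ) ≤ 1)]
    intro i
    have h1 : (x i)^2 ≤ 1 := by
      have := Finset.single_le_sum (f := fun i : Fin n => (x i)^2)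
        (fun i _ => sq_nonneg _) (Finset.mem_univ i)
      rw [hx] at this
      exact this
    rw [Real.norm_eq_abs]
    nlinarith [sq_abs (x i), abs_nonneg (x i)]
  have hScomp : IsCompact {x : Fin n → ℝ | ∑ i : Fin n, (x i)^2 = 1} :=
    Metric.isCompact_of_isClosed_isBounded hclosed hbdd
  have hSne : {x : Fin n → ℝ | ∑ i : Fin n, (x i)^2 = 1}.Nonempty := by
    refine ⟨(Pi.single (⟨0, hn0⟩ : Fin n) (1:ℝ) : Fin n → ℝ), ?_⟩
    show ∑ i : Fin n, ((Pi.single (⟨0, hn0⟩ : Fin n) (1:ℝ) : Fin n → ℝ) i)^2 = 1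
    simp [Pi.single_apply]
  obtain ⟨x₀, hx₀S, hx₀max⟩ := hScomp.exists_isMaxOn hSne
    (((MvPolynomial.continuous_eval Pm).pow 2).continuousOn)
  have hx₀sphere : ∑ i : Fin n, (x₀ i)^2 = 1 := hx₀S
  -- the maximum is positive
  have hex : ∃ x₁ : Fin n → ℝ, eval x₁ Pm ≠ 0 := by
    by_contra h
    push_neg at h
    exact hPm0 (hPm.eq_zero_of_forall_eval_eq_zero h)
  obtain ⟨x₁, hx₁⟩ := hex
  have hr2pos : 0 < ∑ i : Fin n, (x₁ i)^2 := by
    rcases eq_or_lt_of_le (Finset.sum_nonneg fun i (_ : i ∈ Finset.univ) =>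
      sq_nonneg (x₁ i)) with h | h
    · exfalso
      have hy : ∀ i, x₁ i = 0 := by
        intro i
        have := (Finset.sum_eq_zero_iff_of_nonneg
          (fun i _ => sq_nonneg (x₁ i))).mp h.symm i (Finset.mem_univ i)
        exact pow_eq_zero_iff (n := 2) (by norm_num) |>.mp this
      have h00 : (fun i => (0:ℝ) * x₁ i) = x₁ := funext fun i => by rw [hy i]; ring
      have h0 := eval_mul_scal hPm 0 x₁
      rw [h00, zero_pow (by omega : m ≠ 0), zero_mul] at h0
      exact hx₁ h0
    · exact h
  have hMax2pos : 0 < (eval x₀ Pm)^2 := by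
    set r : ℝ := Real.sqrt (∑ i : Fin n, (x₁ i)^2) with hrdef
    have hr : 0 < r := Real.sqrt_pos.mpr hr2pos
    have hrsq : r^2 = ∑ i : Fin n, (x₁ i)^2 := Real.sq_sqrt (le_of_lt hr2pos)
    have hz : ∑ i : Fin n, ((1/r) * x₁ i)^2 = 1 := by
      have he : ∀ i : Fin n, ((1/r) * x₁ i)^2 = (1/r)^2 * (x₁ i)^2 := fun i => by ring
      rw [Finset.sum_congr rfl fun i _ => he i, ← Finset.mul_sum]
      field_simp [hrsq]
      exact hrsq.symm
    have hev := eval_mul_scal hPm (1/r) x₁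
    have hne : eval (fun i => (1/r) * x₁ i) Pm ≠ 0 := by
      rw [hev]
      exact mul_ne_zero (pow_ne_zero _ (by positivity)) hx₁
    have hpos : 0 < (eval (fun i => (1/r) * x₁ i) Pm)^2 := by positivity
    have hle := hx₀max hz
    exact lt_of_lt_of_le hpos hle
  have hx₀ne : eval x₀ Pm ≠ 0 := fun h => by rw [h] at hMax2pos; simp at hMax2pos
  have hmax : ∀ y : Fin n → ℝ, (∑ i : Fin n, (y i)^2 = 1)
      → (eval y Pm)^2 ≤ (eval x₀ Pm)^2 := fun y hy => hx₀max hy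
  -- split on the sign of the maximum
  rcases hx₀ne.lt_or_gt with hneg | hpos
  · -- use -Pm
    have hE0' : ∀ x : Fin n → ℝ,
        (1 + ∑ i : Fin n, (c i)^2) * (∑ i : Fin n, eval x (pderiv i (pderiv i (-Pm))))
          = ∑ i : Fin n, ∑ j : Fin n, c i * c j * eval x (pderiv j (pderiv i (-Pm))) := by
      intro x
      simp only [map_neg, eval_neg, Finset.sum_neg_distrib, mul_neg, Finset.mul_sum]
      have := E0ev x
      rw [Finset.mul_sum] at this
      linarith [this]
    have hE2' : ∀ x : Fin n → ℝ,
        (∑ i : Fin n, (eval x (pderiv i (-Pm)))^2)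
            * (∑ i : Fin n, eval x (pderiv i (pderiv i (-Pm))))
          = ∑ i : Fin n, ∑ j : Fin n, eval x (pderiv i (-Pm)) * eval x (pderiv j (-Pm))
              * eval x (pderiv j (pderiv i (-Pm))) := by
      intro x
      simp only [map_neg, eval_neg, neg_mul, mul_neg, neg_neg, even_two, Even.neg_pow,
        Finset.sum_neg_distrib]
      have := E2ev x
      linarith [this]
    have hpos' : 0 < eval x₀ (-Pm) := by
      rw [map_neg]
      linarith [hneg]
    have hmax' : ∀ y : Fin n → ℝ, (∑ i : Fin n, (y i)^2 = 1)
        → (eval y (-Pm))^2 ≤ (eval x₀ (-Pm))^2 := by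
      intro y hy
      rw [map_neg, map_neg, neg_sq, neg_sq]
      exact hmax y hy
    exact key hm hPm.neg c hE0' hE2' x₀ hx₀sphere hpos' hmax'
  · exact key hm hPm c E0ev E2ev x₀ hx₀sphere hpos hmax
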